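/- Let V be a d-dimensional vector space over a non-Archimedean field and let N be an ultrametric norm on V diagonalized by a basis (s₁,…,s_d). Then the induced determinant norm det N on the one-dimensional space Λ^d V satisfies det N(s₁ ∧ ⋯ ∧ s_d) = ∏ᵢ N(sᵢ). -/

import Mathlib

/-- The ultrametric norm on `V` diagonalized by the basis `b`, with values `w i` on the
basis vectors. -/
noncomputable def diagNorm {K V ι : Type*} [NontriviallyNormedField K]
    [AddCommGroup V] [Module K V] [Fintype ι] [Nonempty ι]
    (b : Module.Basis ι K V) (w : ι → ℝ) (v : V) : ℝ :=
  Finset.univ.sup' Finset.univ_nonempty fun i => ‖b.repr v i‖ * w i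

section aux

variable {K V ι : Type*} [NontriviallyNormedField K]
    [AddCommGroup V] [Module K V] [Fintype ι] [Nonempty ι]
    (b : Module.Basis ι K V) (w : ι → ℝ)

lemma diagNorm_nonneg (hw : ∀ i, 0 < w i) (v : V) : 0 ≤ diagNorm b w v := by
  classical
  obtain ⟨i⟩ := ‹Nonempty ι›
  refine le_trans ?_ (Finset.le_sup' (fun i => ‖b.repr v i‖ * w i) (Finset.mem_univ i))
  exact mul_nonneg (norm_nonneg _) (hw i).le

lemma le_diagNorm (v : V) (i : ι) : ‖b.repr v i‖ * w i ≤ diagNorm b w v :=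
  Finset.le_sup' (fun i => ‖b.repr v i‖ * w i) (Finset.mem_univ i)

lemma diagNorm_basis (hw : ∀ i, 0 < w i) (k : ι) : diagNorm b w (b k) = w k := by
  classical
  apply le_antisymm
  · apply Finset.sup'_le
    intro i _
    rcases eq_or_ne i k with rfl | h
    · simp
    · simp [Module.Basis.repr_self, Finsupp.single_apply, Ne.symm h, (hw k).le]
  · simpa using le_diagNorm b w (b k) k

/-- Key estimate: the norm of the determinant of the coordinates of `v` bounds below
the product of the diagonal norms. -/
lemma det_norm_le [IsUltrametricDist K] [DecidableEq ι] (hw : ∀ i, 0 < w i) (v : ι → V) :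
    ‖b.det v‖ * ∏ k, w k ≤ ∏ k, diagNorm b w (v k) := by
  rw [Module.Basis.det_apply, Matrix.det_apply]
  obtain ⟨σ, -, hσ⟩ := IsUltrametricDist.exists_norm_finset_sum_le (Finset.univ)
    (fun σ : Equiv.Perm ι => Equiv.Perm.sign σ • ∏ i, b.toMatrix v (σ i) i)
  have hnorm : ‖Equiv.Perm.sign σ • ∏ i, b.toMatrix v (σ i) i‖
      = ∏ i, ‖b.repr (v i) (σ i)‖ := by
    rcases Int.units_eq_one_or (Equiv.Perm.sign σ) with h | h <;>
      simp [h, Module.Basis.toMatrix_apply, norm_prod]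
  calc ‖∑ σ : Equiv.Perm ι, Equiv.Perm.sign σ • ∏ i, b.toMatrix v (σ i) i‖ * ∏ k, w k
      ≤ (∏ i, ‖b.repr (v i) (σ i)‖) * ∏ k, w (σ k) := by
        rw [Equiv.prod_comp σ w]
        exact mul_le_mul_of_nonneg_right (hσ.trans hnorm.le)
          (Finset.prod_nonneg fun i _ => (hw i).le)
    _ = ∏ i, ‖b.repr (v i) (σ i)‖ * w (σ i) := by rw [← Finset.prod_mul_distrib]
    _ ≤ ∏ k, diagNorm b w (v k) := by
        refine Finset.prod_le_prod (fun i _ => mul_nonneg (norm_nonneg _) (hw (σ i)).le) fun i _ => ?_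
        exact le_diagNorm b w (v i) (σ i)

end aux

/-- The determinant norm on the top exterior power: for a norm `N` diagonalized by a basis
`(s₁, …, s_d)`, the quotient norm induced on `Λᵈ V` (computed as the infimum, over all
decompositions of an element as a sum of pure wedges `∑ᵢ v₁ⁱ ∧ ⋯ ∧ v_dⁱ`, of
`maxᵢ ∏ₖ N(vₖⁱ)`) satisfies `det N (s₁ ∧ ⋯ ∧ s_d) = ∏ᵢ N(sᵢ)`. -/
theorem stmt_2 {K V : Type*} [NontriviallyNormedField K] [IsUltrametricDist K]
    [AddCommGroup V] [Module K V] (d : ℕ) [NeZero d]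
    (b : Module.Basis (Fin d) K V) (w : Fin d → ℝ) (hw : ∀ i, 0 < w i) :
    sInf { r : ℝ | ∃ (n : ℕ) (u : Fin n → Fin d → V),
        ((ExteriorAlgebra.ιMulti K d fun k => b k)
            = ∑ i, ExteriorAlgebra.ιMulti K d (u i)) ∧
          r = ⨆ i, ∏ k, diagNorm b w (u i k) }
      = ∏ k, diagNorm b w (b k) := by
  classical
  have hprod : ∏ k, diagNorm b w (b k) = ∏ k, w k := by
    exact Finset.prod_congr rfl fun k _ => diagNorm_basis b w hw k
  -- The linear functional extracting the determinant coefficient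
  set f : ∀ n, V [⋀^Fin n]→ₗ[K] K := fun n => if h : n = d then h ▸ b.det else 0 with hf
  set L : ExteriorAlgebra K V →ₗ[K] K := ExteriorAlgebra.liftAlternating f with hL
  have hLι : ∀ v : Fin d → V, L (ExteriorAlgebra.ιMulti K d v) = b.det v := by
    intro v
    rw [hL, ExteriorAlgebra.liftAlternating_apply_ιMulti, hf]
    simp
  -- Lower bound for every element of the set
  have hlb : ∀ r ∈ { r : ℝ | ∃ (n : ℕ) (u : Fin n → Fin d → V),
        ((ExteriorAlgebra.ιMulti K d fun k => b k)
            = ∑ i, ExteriorAlgebra.ιMulti K d (u i)) ∧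
          r = ⨆ i, ∏ k, diagNorm b w (u i k) }, (∏ k, w k) ≤ r := by
    rintro r ⟨n, u, heq, rfl⟩
    have hdet : (1 : K) = ∑ i, b.det (u i) := by
      have := congrArg L heq
      rw [hLι, map_sum] at this
      simpa [hLι, Module.Basis.det_self] using this
    have hn : n ≠ 0 := by
      rintro rfl
      simp at hdet
    haveI : Nonempty (Fin n) := ⟨⟨0, Nat.pos_of_ne_zero hn⟩⟩
    obtain ⟨i, -, hi⟩ := IsUltrametricDist.exists_norm_finset_sum_le (Finset.univ)
      (fun i : Fin n => b.det (u i))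
    rw [← hdet, norm_one] at hi
    have h1 : (∏ k, w k) ≤ ∏ k, diagNorm b w (u i k) := by
      calc (∏ k, w k) = 1 * ∏ k, w k := (one_mul _).symm
        _ ≤ ‖b.det (u i)‖ * ∏ k, w k :=
            mul_le_mul_of_nonneg_right hi (Finset.prod_nonneg fun k _ => (hw k).le)
        _ ≤ ∏ k, diagNorm b w (u i k) := det_norm_le b w hw (u i)
    refine h1.trans (le_ciSup (f := fun i => ∏ k, diagNorm b w (u i k)) ?_ i)
    exact Set.Finite.bddAbove (Set.finite_range _)
  rw [hprod]
  apply le_antisymm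
  · apply csInf_le ⟨∏ k, w k, hlb⟩
    refine ⟨1, fun _ => b, by simp, ?_⟩
    rw [ciSup_unique]
    exact (hprod.trans (Finset.prod_congr rfl fun k _ => rfl)).symm
  · refine le_csInf ⟨⨆ _ : Fin 1, ∏ k, diagNorm b w (b k), 1, fun _ => b, by simp, rfl⟩ hlb
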